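/- Let Z = [M̂ E] be the p×(n) matrix obtained by column-binding M̂ and E, and assume Z^⊤Z is invertible. Then for every y ∈ ℝ^p, the first K entries of the ordinary least squares coefficient vector ψ̂ = (Z^⊤Z)⁻¹Z^⊤y coincide with A^⊤β̂, where β̂ = (X^⊤X)⁻¹X^⊤y; that is, A^⊤(X^⊤X)⁻¹X^⊤y = ((Z^⊤Z)⁻¹Z^⊤y)[1:K]. -/

import Mathlib

open Matrix

/-- The first K entries of the OLS coefficient vector of `y` on `Z = [M̂ E]`
coincide with `Aᵀ β̂` where `β̂` is the OLS coefficient vector of `y` on `X`. -/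
theorem stmt_0 (p n K : ℕ) (hK : 0 < K) (hKn : K ≤ n) (hnp : n < p)
    (X : Matrix (Fin p) (Fin n) ℝ) (A : Matrix (Fin n) (Fin K) ℝ)
    (hX : IsUnit (Xᵀ * X)) (hA : IsUnit (Aᵀ * A))
    (N : Matrix (Fin n) (Fin (n - K)) ℝ)
    (hN1 : Nᵀ * N = 1) (hN2 : N * Nᵀ = 1 - A * (Aᵀ * A)⁻¹ * Aᵀ)
    (Z : Matrix (Fin p) (Fin K ⊕ Fin (n - K)) ℝ)
    (hZ : Z = Matrix.fromCols (X * A * (Aᵀ * A)⁻¹) (X * N))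
    (hZZ : IsUnit (Zᵀ * Z))
    (y : Fin p → ℝ) :
    ∀ k : Fin K,
      ((Aᵀ * (Xᵀ * X)⁻¹ * Xᵀ).mulVec y) k
        = (((Zᵀ * Z)⁻¹ * Zᵀ).mulVec y) (Sum.inl k) := by
  set W : Matrix (Fin n) (Fin K ⊕ Fin (n - K)) ℝ :=
    Matrix.fromCols (A * (Aᵀ * A)⁻¹) N with hW
  set V : Matrix (Fin K ⊕ Fin (n - K)) (Fin n) ℝ :=
    Matrix.fromRows Aᵀ Nᵀ with hV
  have hWV : W * V = 1 := by
    rw [hW, hV, Matrix.fromCols_mul_fromRows, hN2]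
    abel
  have hZW : Z = X * W := by
    rw [hZ, hW, Matrix.mul_fromCols, Matrix.mul_assoc]
  have hXX : Xᵀ * X * (Xᵀ * X)⁻¹ = 1 :=
    Matrix.mul_nonsing_inv _ ((Matrix.isUnit_iff_isUnit_det _).mp hX)
  have hZdet : IsUnit (Zᵀ * Z).det := (Matrix.isUnit_iff_isUnit_det _).mp hZZ
  have h1 : Zᵀ * Z * (V * (Xᵀ * X)⁻¹ * Xᵀ) = Zᵀ := by
    rw [hZW, Matrix.transpose_mul]
    simp only [Matrix.mul_assoc]
    have hWV' : W * (V * ((Xᵀ * X)⁻¹ * Xᵀ)) = (Xᵀ * X)⁻¹ * Xᵀ := by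
      rw [← Matrix.mul_assoc, hWV, Matrix.one_mul]
    rw [hWV']
    have haux : Xᵀ * (X * ((Xᵀ * X)⁻¹ * Xᵀ)) = Xᵀ := by
      rw [← Matrix.mul_assoc, ← Matrix.mul_assoc, hXX, Matrix.one_mul]
    rw [haux]
  have key : (Zᵀ * Z)⁻¹ * Zᵀ = V * (Xᵀ * X)⁻¹ * Xᵀ := by
    calc (Zᵀ * Z)⁻¹ * Zᵀ = (Zᵀ * Z)⁻¹ * (Zᵀ * Z * (V * (Xᵀ * X)⁻¹ * Xᵀ)) := by rw [h1]
      _ = V * (Xᵀ * X)⁻¹ * Xᵀ := by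
          rw [← Matrix.mul_assoc, Matrix.nonsing_inv_mul _ hZdet, Matrix.one_mul]
  intro k
  rw [key, hV]
  rw [Matrix.fromRows_mul, Matrix.fromRows_mul]
  simp [Matrix.fromRows, Matrix.of_apply, Sum.elim_inl, Matrix.mulVec, dotProduct]
  rfl
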